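/- Let H be a complex Hilbert space, N a unital *-subalgebra of the algebra B(H) of bounded linear operators on H, and Ω ∈ H a unit vector that is cyclic for N (i.e. the linear span of {XΩ : X ∈ N} is dense in H). Then for a unit vector ξ ∈ H the following are equivalent: (i) ⟨Xξ, ξ⟩ = ⟨XΩ, Ω⟩ for every X ∈ N; (ii) there exists an isometry W ∈ B(H) (i.e. W*W = 1) commuting with every element of N such that ξ = WΩ. -/

import Mathlib

open scoped InnerProductSpace
set_option maxHeartbeats 1000000

/-- For a unit vector `ξ` in a Hilbert space `H` with a unital *-subalgebra `N ⊆ B(H)` and a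
cyclic unit vector `Ω` for `N`, the state induced by `ξ` agrees with that induced by `Ω` on `N`
iff `ξ = WΩ` for some isometry `W` commuting with every element of `N`. -/
theorem localized_states_are_isometry_images
    {H : Type*} [NormedAddCommGroup H] [InnerProductSpace ℂ H] [CompleteSpace H]
    (N : StarSubalgebra ℂ (H →L[ℂ] H)) (Ω : H) (hΩ : ‖Ω‖ = 1)
    (hcyc : Dense (Submodule.span ℂ ((fun X : H →L[ℂ] H => X Ω) '' (N : Set (H →L[ℂ] H))) : Set H))
    (ξ : H) (hξ : ‖ξ‖ = 1) :
    (∀ X ∈ N, ⟪X ξ, ξ⟫_ℂ = ⟪X Ω, Ω⟫_ℂ) ↔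
      ∃ W : H →L[ℂ] H, star W * W = 1 ∧ (∀ X ∈ N, W * X = X * W) ∧ ξ = W Ω := by
  constructor
  · intro hstate
    -- the "evaluation at Ω" and "evaluation at ξ" linear maps on N
    set K : N →ₗ[ℂ] H :=
      { toFun := fun X => (X : H →L[ℂ] H) Ω
        map_add' := fun X Y => rfl
        map_smul' := fun c X => rfl } with hK
    set L : N →ₗ[ℂ] H :=
      { toFun := fun X => (X : H →L[ℂ] H) ξ
        map_add' := fun X Y => rfl
        map_smul' := fun c X => rfl } with hL
    -- the key norm identity
    have hnormXY : ∀ X : N, ‖(X : H →L[ℂ] H) ξ‖ = ‖(X : H →L[ℂ] H) Ω‖ := by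
      intro X
      have hmem : star (X : H →L[ℂ] H) * (X : H →L[ℂ] H) ∈ N :=
        mul_mem (star_mem X.2) X.2
      have h1 := hstate _ hmem
      have h2 : ⟪(X : H →L[ℂ] H) ξ, (X : H →L[ℂ] H) ξ⟫_ℂ
          = ⟪(X : H →L[ℂ] H) Ω, (X : H →L[ℂ] H) Ω⟫_ℂ := by
        simpa [ContinuousLinearMap.mul_apply, ContinuousLinearMap.star_eq_adjoint,
          ContinuousLinearMap.adjoint_inner_left] using h1
      rw [@norm_eq_sqrt_re_inner ℂ, @norm_eq_sqrt_re_inner ℂ, h2]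
    have hkerle : LinearMap.ker K ≤ LinearMap.ker L := by
      intro X hX
      rw [LinearMap.mem_ker] at hX ⊢
      have := hnormXY X
      rw [hL]
      simp only [LinearMap.coe_mk, AddHom.coe_mk]
      rw [← norm_eq_zero, this]
      simp only [hK, LinearMap.coe_mk, AddHom.coe_mk] at hX
      rw [hX, norm_zero]
    set S : Submodule ℂ H := LinearMap.range K with hS
    have hspan : Submodule.span ℂ ((fun X : H →L[ℂ] H => X Ω) '' (N : Set (H →L[ℂ] H))) = S := by
      apply le_antisymm
      · rw [Submodule.span_le]
        rintro _ ⟨X, hX, rfl⟩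
        exact ⟨⟨X, hX⟩, rfl⟩
      · rintro _ ⟨X, rfl⟩
        exact Submodule.subset_span ⟨(X : H →L[ℂ] H), X.2, rfl⟩
    have hdense : Dense (S : Set H) := by rw [← hspan]; exact hcyc
    -- the densely defined isometry
    set g : S →ₗ[ℂ] H :=
      ((LinearMap.ker K).liftQ L hkerle).comp (LinearMap.quotKerEquivRange K).symm.toLinearMap
      with hg
    have gkey : ∀ X : N, g ⟨K X, ⟨X, rfl⟩⟩ = L X := by
      intro X
      have h1 : (LinearMap.quotKerEquivRange K) (Submodule.Quotient.mk X) = ⟨K X, ⟨X, rfl⟩⟩ :=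
        Subtype.ext (LinearMap.quotKerEquivRange_apply_mk K X)
      have h2 : (LinearMap.quotKerEquivRange K).symm ⟨K X, ⟨X, rfl⟩⟩
          = Submodule.Quotient.mk X := by
        rw [← h1, LinearEquiv.symm_apply_apply]
      rw [hg]
      simp only [LinearMap.comp_apply, LinearEquiv.coe_toLinearMap, h2, Submodule.liftQ_apply]
    have gnorm : ∀ s : S, ‖g s‖ = ‖(s : H)‖ := by
      rintro ⟨v, hv⟩
      obtain ⟨X, rfl⟩ := hv
      rw [gkey X]
      simpa [hL, hK] using hnormXY X
    set li : S →ₗᵢ[ℂ] H := ⟨g, gnorm⟩ with hli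
    set f : S →L[ℂ] H := li.toContinuousLinearMap with hf
    set W : H →L[ℂ] H :=
      f.extend (Submodule.subtypeL S) with hW
    have keyW : ∀ X : N, W ((X : H →L[ℂ] H) Ω) = (X : H →L[ℂ] H) ξ := by
      intro X
      have h1 := ContinuousLinearMap.extend_eq f (e := Submodule.subtypeL S) hdense.denseRange_val
        isUniformEmbedding_subtype_val.isUniformInducing ⟨K X, ⟨X, rfl⟩⟩
      have h2 : f ⟨K X, ⟨X, rfl⟩⟩ = L X := gkey X
      simp only [Submodule.subtypeL_apply] at h1
      rw [← hW] at h1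
      exact h1.trans h2
    have Wnorm : ∀ x : H, ‖W x‖ = ‖x‖ := by
      have heq : (fun x : H => ‖W x‖) = fun x : H => ‖x‖ := by
        refine Continuous.ext_on hdense (W.continuous.norm) continuous_norm ?_
        rintro v ⟨X, rfl⟩
        show ‖W ((X : H →L[ℂ] H) Ω)‖ = ‖(X : H →L[ℂ] H) Ω‖
        rw [keyW X]
        exact hnormXY X
      intro x; exact congrFun heq x
    let li2 : H →ₗᵢ[ℂ] H := ⟨(W : H →ₗ[ℂ] H), Wnorm⟩
    refine ⟨W, ?_, ?_, ?_⟩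
    · ext x
      refine ext_inner_left ℂ fun v => ?_
      have : ⟪v, (star W * W) x⟫_ℂ = ⟪W v, W x⟫_ℂ := by
        simp [ContinuousLinearMap.mul_apply, ContinuousLinearMap.star_eq_adjoint,
          ContinuousLinearMap.adjoint_inner_right]
      rw [this]
      have : ⟪W v, W x⟫_ℂ = ⟪v, x⟫_ℂ := li2.inner_map_map v x
      simpa using this
    · intro X hX
      refine ContinuousLinearMap.coeFn_injective ?_
      refine Continuous.ext_on hdense (W * X).continuous (X * W).continuous ?_
      rintro v ⟨Y, rfl⟩
      show W (X ((Y : H →L[ℂ] H) Ω)) = X (W ((Y : H →L[ℂ] H) Ω))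
      have hXY : X ((Y : H →L[ℂ] H) Ω) = ((⟨X, hX⟩ * Y : N) : H →L[ℂ] H) Ω := rfl
      rw [hXY, keyW (⟨X, hX⟩ * Y), keyW Y]
      rfl
    · have := keyW 1
      simpa using this.symm
  · rintro ⟨W, hWW, hcomm, rfl⟩ X hX
    have h1 : X (W Ω) = W (X Ω) := by
      have := hcomm X hX
      calc X (W Ω) = (X * W) Ω := rfl
        _ = (W * X) Ω := by rw [this]
        _ = W (X Ω) := rfl
    rw [h1]
    have h2 : ⟪W (X Ω), W Ω⟫_ℂ = ⟪(star W * W) (X Ω), Ω⟫_ℂ := by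
      simp [ContinuousLinearMap.mul_apply, ContinuousLinearMap.star_eq_adjoint,
        ContinuousLinearMap.adjoint_inner_left]
    rw [h2, hWW]
    simp
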